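/- If 1 < D ≤ 2, then for every point (x,y) of the closed upper half-plane, J(x,y) ≤ 0 if and only if x² + y² ≤ 4; that is, the Wulff shape {(x,y) : y ≥ 0, J(x,y) ≤ 0} is exactly the closed half-disc of radius 2 centered at the origin. -/

import Mathlib

open Real Filter Set

noncomputable section

/-- The field Lagrangian `L_f(v₁,v₂) = (v₁² + v₂²)/4 − 1`. -/
def Lf (v₁ v₂ : ℝ) : ℝ := (v₁ ^ 2 + v₂ ^ 2) / 4 - 1

/-- The effective road Hamiltonian `H_r(q) = q² + (p_q)² + 1` built from the
critical-slope function `pq`. -/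
def Hr (pq : ℝ → ℝ) (q : ℝ) : ℝ := q ^ 2 + pq q ^ 2 + 1

/-- The road Lagrangian: the Legendre transform of `Hr`. -/
def Lr (pq : ℝ → ℝ) (v : ℝ) : ℝ := ⨆ q : ℝ, (v * q - Hr pq q)

/-- `pq` assigns to each `q` the critical slope `p_q`: it equals `0` when
`(D−1)q² ≤ 1`, and otherwise it is the unique positive root of
`(D−1)q² = p² + 1 + μp/(κν + p)`. -/
def IsCriticalSlope (D μ ν κ : ℝ) (pq : ℝ → ℝ) : Prop :=
  ∀ q : ℝ,
    ((D - 1) * q ^ 2 ≤ 1 → pq q = 0) ∧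
    (1 < (D - 1) * q ^ 2 →
      0 < pq q ∧ (D - 1) * q ^ 2 = pq q ^ 2 + 1 + μ * pq q / (κ * ν + pq q))

/-- The set of candidate costs in the control problem at a point `(x,y)` with
`x ≥ 0`, `y ≥ 0`: the pure-field cost, the broken road-then-field costs, and
(when `y = 0`) the pure-road cost. -/
def Jset (pq : ℝ → ℝ) (x y : ℝ) : Set ℝ :=
  {Lf x y} ∪
    {c | ∃ τ z : ℝ, 0 < τ ∧ τ < 1 ∧ 0 ≤ z ∧ z ≤ x ∧
      c = (1 - τ) * Lf ((x - z) / (1 - τ)) (y / (1 - τ)) + τ * Lr pq (z / τ)} ∪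
    (if y = 0 then {Lr pq x} else ∅)

/-- The value function `J(x,y)`, extended evenly in `x`. -/
def J (pq : ℝ → ℝ) (x y : ℝ) : ℝ := sInf (Jset pq |x| y)
/-- The field Hamiltonian `H_f(q,p) = q² + p² + 1`. -/
def Hf (q p : ℝ) : ℝ := q ^ 2 + p ^ 2 + 1

/-- The road boundary Hamiltonian `F₀(q,p) = Dq² − μp/(κν + p)`. -/
def F0 (D μ ν κ q p : ℝ) : ℝ := D * q ^ 2 - μ * p / (κ * ν + p)

/-- The spreading speed along the road, `inf_{q>0} H_r(q)/q`. -/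
def roadSpeed (pq : ℝ → ℝ) : ℝ := sInf ((fun q => Hr pq q / q) '' Set.Ioi (0 : ℝ))

/-- The directional spreading speed in direction `ϑ` (measured from the
positive `y`-axis). -/
def cstar (pq : ℝ → ℝ) (ϑ : ℝ) : ℝ :=
  sSup {r : ℝ | 0 ≤ r ∧ J pq (r * Real.sin ϑ) (r * Real.cos ϑ) ≤ 0}

/-- Reflection across the line through the origin in direction `(cos a, sin a)`. -/
def Psi (a : ℝ) (p : ℝ × ℝ) : ℝ × ℝ :=
  (p.1 * Real.cos (2 * a) + p.2 * Real.sin (2 * a),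
   p.1 * Real.sin (2 * a) - p.2 * Real.cos (2 * a))

/-- The closed cone of opening angle `2a` between the positive `x`-axis and the
ray at angle `π/2 − 2a` from the positive `y`-axis. -/
def coneA (a : ℝ) : Set (ℝ × ℝ) :=
  {p | ∃ r ϑ : ℝ, 0 ≤ r ∧ π / 2 - 2 * a ≤ ϑ ∧ ϑ ≤ π / 2 ∧
    p = (r * Real.sin ϑ, r * Real.cos ϑ)}

lemma Lr_bound_aux (pq : ℝ → ℝ) (v q : ℝ) : v * q - Hr pq q ≤ v ^ 2 / 4 - 1 := by
  unfold Hr; nlinarith [sq_nonneg (pq q), sq_nonneg (v - 2 * q)]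

lemma bddAbove_Lr (pq : ℝ → ℝ) (v : ℝ) :
    BddAbove (Set.range fun q => v * q - Hr pq q) := by
  refine ⟨v ^ 2 / 4 - 1, ?_⟩
  rintro r ⟨q, rfl⟩
  exact Lr_bound_aux pq v q

lemma le_Lr (pq : ℝ → ℝ) (v q : ℝ) : v * q - Hr pq q ≤ Lr pq v :=
  le_ciSup (bddAbove_Lr pq v) q


lemma sqrt_reverse_triangle {X y z r : ℝ} (hz0 : 0 ≤ z) (hr0 : 0 ≤ r)
    (hr2 : r ^ 2 = (X - z) ^ 2 + y ^ 2) :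
    Real.sqrt (X ^ 2 + y ^ 2) ≤ r + z := by
  have hXzr : X - z ≤ r := by
    rcases le_or_gt (X - z) 0 with h | h
    · linarith
    · nlinarith [sq_nonneg y]
  have h1 : X ^ 2 + y ^ 2 ≤ (r + z) ^ 2 := by
    nlinarith [mul_le_mul_of_nonneg_left hXzr hz0]
  calc Real.sqrt (X ^ 2 + y ^ 2) ≤ Real.sqrt ((r + z) ^ 2) := Real.sqrt_le_sqrt h1
    _ = r + z := by rw [Real.sqrt_sq (by linarith)]

lemma broken_lower {pq : ℝ → ℝ} (hLrlin : ∀ v : ℝ, v - 2 ≤ Lr pq v)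
    {X y z τ : ℝ} (hτ0 : 0 < τ) (hτ1 : τ < 1) (hz0 : 0 ≤ z) :
    Real.sqrt (X ^ 2 + y ^ 2) - 2 ≤
      (1 - τ) * Lf ((X - z) / (1 - τ)) (y / (1 - τ)) + τ * Lr pq (z / τ) := by
  set s := 1 - τ with hs
  have hs0 : 0 < s := by linarith
  set B := (X - z) ^ 2 + y ^ 2 with hB
  have hB0 : 0 ≤ B := by positivity
  set r := Real.sqrt B with hr
  have hr0 : 0 ≤ r := Real.sqrt_nonneg _
  have hr2 : r ^ 2 = B := Real.sq_sqrt hB0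
  have htri : Real.sqrt (X ^ 2 + y ^ 2) ≤ r + z :=
    sqrt_reverse_triangle hz0 hr0 (by rw [hr2, hB])
  have hc1 : s * Lf ((X - z) / s) (y / s) = B / (4 * s) - s := by
    unfold Lf; rw [hB]; field_simp
  have hc2 : τ * (z / τ - 2) = z - 2 * τ := by field_simp
  have hstep1 : B / (4 * s) - s + (z - 2 * τ) ≤
      s * Lf ((X - z) / s) (y / s) + τ * Lr pq (z / τ) := by
    rw [hc1, ← hc2]
    have := mul_le_mul_of_nonneg_left (hLrlin (z / τ)) hτ0.le
    linarith
  have hamgm : r - s ≤ B / (4 * s) := by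
    rw [le_div_iff₀ (by positivity)]
    nlinarith [sq_nonneg (r - 2 * s)]
  have : Real.sqrt (X ^ 2 + y ^ 2) - 2 ≤ B / (4 * s) - s + (z - 2 * τ) := by
    have hsτ : s + τ = 1 := by rw [hs]; ring
    linarith
  linarith

/-- When `1 < D ≤ 2`, the Wulff shape is exactly the closed half-disc of
radius `2`: for `y ≥ 0`, `J(x,y) ≤ 0 ↔ x² + y² ≤ 4`. -/
theorem wulff_half_disc
    (D μ ν κ : ℝ) (hD : 1 < D) (hD2 : D ≤ 2)
    (hμ : 0 < μ) (hν : 0 < ν) (hκ : 0 < κ)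
    (pq : ℝ → ℝ) (hpq : IsCriticalSlope D μ ν κ pq)
    (x y : ℝ) (hy : 0 ≤ y) :
    J pq x y ≤ 0 ↔ x ^ 2 + y ^ 2 ≤ 4 := by
  have h00 : pq 0 = 0 := (hpq 0).1 (by norm_num)
  have h10 : pq 1 = 0 := (hpq 1).1 (by norm_num; linarith)
  have hLrm1 : ∀ v : ℝ, (-1 : ℝ) ≤ Lr pq v := by
    intro v
    have h := le_Lr pq v 0
    rw [Hr, h00] at h
    nlinarith
  have hLrlin : ∀ v : ℝ, v - 2 ≤ Lr pq v := by
    intro v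
    have h := le_Lr pq v 1
    rw [Hr, h10] at h
    nlinarith
  have hLfm1 : ∀ a b : ℝ, (-1 : ℝ) ≤ Lf a b := by
    intro a b; unfold Lf; nlinarith [sq_nonneg a, sq_nonneg b]
  set X := |x| with hX
  have hX0 : 0 ≤ X := abs_nonneg x
  have hXsq : X ^ 2 = x ^ 2 := sq_abs x
  have hJdef : J pq x y = sInf (Jset pq X y) := rfl
  clear_value X
  have hbdd : BddBelow (Jset pq X y) := by
    refine ⟨-1, ?_⟩
    intro c hc
    rcases hc with (hc | ⟨τ, z, hτ0, hτ1, hz0, hzX, rfl⟩) | hc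
    · rw [Set.mem_singleton_iff] at hc; rw [hc]; exact hLfm1 X y
    · have h1 := hLfm1 ((X - z) / (1 - τ)) (y / (1 - τ))
      have h2 := hLrm1 (z / τ)
      nlinarith [mul_le_mul_of_nonneg_left h1 (by linarith : (0:ℝ) ≤ 1 - τ),
        mul_le_mul_of_nonneg_left h2 hτ0.le]
    · by_cases hy0 : y = 0
      · rw [if_pos hy0, Set.mem_singleton_iff] at hc; rw [hc]; exact hLrm1 X
      · rw [if_neg hy0] at hc; exact absurd hc (Set.notMem_empty c)
  have hmem : Lf X y ∈ Jset pq X y :=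
    Set.mem_union_left _ (Set.mem_union_left _ rfl)
  constructor
  · intro hJ
    by_contra hgt
    push_neg at hgt
    have hXy : 4 < X ^ 2 + y ^ 2 := by rw [hXsq]; linarith
    set R := Real.sqrt (X ^ 2 + y ^ 2) with hR
    have hR0 : 0 ≤ R := Real.sqrt_nonneg _
    have hR2 : R ^ 2 = X ^ 2 + y ^ 2 := Real.sq_sqrt (by positivity)
    have hRX : y = 0 → R = X := by
      intro hy0; rw [hR, hy0]; simp [Real.sqrt_sq hX0]
    clear_value R
    have hR2' : 2 < R := by nlinarith
    set ε := min ((X ^ 2 + y ^ 2) / 4 - 1) (R - 2) with hε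
    have hε0 : 0 < ε := lt_min (by linarith) (by linarith)
    have hεle1 : ε ≤ (X ^ 2 + y ^ 2) / 4 - 1 := min_le_left _ _
    have hεle2 : ε ≤ R - 2 := min_le_right _ _
    clear_value ε
    have hlow : ∀ c ∈ Jset pq X y, ε ≤ c := by
      intro c hc
      rcases hc with (hc | ⟨τ, z, hτ0, hτ1, hz0, hzX, rfl⟩) | hc
      · rw [Set.mem_singleton_iff] at hc; rw [hc]
        unfold Lf
        exact hεle1
      · -- broken path: use Lr v ≥ v - 2
        have h := broken_lower hLrlin hτ0 hτ1 hz0 (X := X) (y := y) (z := z)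
        rw [← hR] at h
        linarith [hεle2]
      · by_cases hy0 : y = 0
        · rw [if_pos hy0, Set.mem_singleton_iff] at hc; rw [hc]
          have h2 := hLrlin X
          rw [hRX hy0] at hεle2
          linarith
        · rw [if_neg hy0] at hc; exact absurd hc (Set.notMem_empty c)
    have hJge : ε ≤ J pq x y := by
      rw [hJdef]
      exact le_csInf ⟨_, hmem⟩ hlow
    linarith
  · intro h
    have hLf : Lf X y ≤ 0 := by
      unfold Lf; nlinarith [hXsq]
    calc J pq x y ≤ Lf X y := by rw [hJdef]; exact csInf_le hbdd hmem
      _ ≤ 0 := hLf
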